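/- Let p > 0 and for ε > 0 define the Green function G_{1,ε}(t,s) = -e^{-ε√p|t-s|}·(1-e^{-2ε√p·min(t,s)})·(1-e^{-2ε√p·(1-max(t,s))}) / (2ε√p·(1-e^{-2ε√p})) on [0,1]×[0,1], and let Υ(t,s) = -min(t,s)·(1-max(t,s)). Then sup_{t,s ∈ [0,1]} |G_{1,ε}(t,s) - Υ(t,s)| → 0 as ε → 0⁺. -/

import Mathlib

open Filter Set

lemma aux1 (x a : ℝ) (hx : 0 ≤ x) (h1 : 1 - x ≤ a) (h2 : a * (1 + x) ≤ 1) :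
    x * (1 - x) ≤ 1 - a := by
  nlinarith [mul_nonneg hx (show (0:ℝ) ≤ x - (1 - a) by linarith)]

lemma expfacts (x : ℝ) (hx : 0 ≤ x) :
    1 - x ≤ Real.exp (-x) ∧ Real.exp (-x) * (1 + x) ≤ 1 ∧ Real.exp (-x) ≤ 1 := by
  have h1 : 1 - x ≤ Real.exp (-x) := by
    have := Real.add_one_le_exp (-x); linarith
  have h2 : Real.exp (-x) * (1 + x) ≤ 1 := by
    have h := Real.add_one_le_exp x
    have hpos : 0 < Real.exp (-x) := Real.exp_pos _
    calc Real.exp (-x) * (1 + x) ≤ Real.exp (-x) * Real.exp x := by nlinarith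
      _ = 1 := by rw [← Real.exp_add]; simp
  exact ⟨h1, h2, Real.exp_le_one_iff.mpr (by linarith)⟩

set_option maxHeartbeats 1600000 in
lemma keyc (c m M d : ℝ) (hc : 0 < c) (hc2 : c ≤ 1/2) (hm : 0 ≤ m) (hm1 : m ≤ 1)
    (hM : 0 ≤ M) (hM1 : M ≤ 1) (hd : 0 ≤ d) (hd1 : d ≤ 1) :
    |(-(Real.exp (-(c * d)) * (1 - Real.exp (-(2 * c * m))) *
        (1 - Real.exp (-(2 * c * M)))) /
      (2 * c * (1 - Real.exp (-(2 * c))))) - (-(m * M))| ≤ 5 * c := by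
  obtain ⟨hE2, -, hE1⟩ := expfacts (c * d) (by positivity)
  obtain ⟨ha1, ha2, ha3⟩ := expfacts (2 * c * m) (by positivity)
  obtain ⟨hb1, hb2, hb3⟩ := expfacts (2 * c * M) (by positivity)
  obtain ⟨hq1, hq2, hq3⟩ := expfacts (2 * c) (by positivity)
  set E := Real.exp (-(c * d)) with hE
  set a := Real.exp (-(2 * c * m)) with ha
  set b := Real.exp (-(2 * c * M)) with hb
  set q := Real.exp (-(2 * c)) with hq
  have hmM : m * M ≤ 1 := mul_le_one₀ hm1 hM hM1
  have hA : 2 * c * m * (1 - 2 * c * m) ≤ 1 - a := aux1 _ _ (by positivity) ha1 ha2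
  have hB : 2 * c * M * (1 - 2 * c * M) ≤ 1 - b := aux1 _ _ (by positivity) hb1 hb2
  have hq4 : q < 1 := by
    rw [hq]; exact Real.exp_lt_one_iff.mpr (by nlinarith)
  have hD : 0 < 2 * c * (1 - q) := by nlinarith
  have hE3 : 1 - c ≤ E := by nlinarith
  have hEpos : (0:ℝ) < E := Real.exp_pos _
  have n1 : 0 ≤ 1 - a := by linarith
  have n2 : 0 ≤ 1 - b := by linarith
  have hA' : 1 - a ≤ 2 * c * m := by linarith
  have hB' : 1 - b ≤ 2 * c * M := by linarith
  have hq5 : 1 - q ≤ 2 * c := by linarith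
  have hq6 : 2 * c ≤ (1 - q) * (1 + 2 * c) := by nlinarith
  -- upper bound on the numerator
  have h1 : E * (1 - a) * (1 - b) ≤ 2 * c * m * (2 * c * M) := by
    calc E * (1 - a) * (1 - b) ≤ 1 * (2 * c * m) * (1 - b) := by
          exact mul_le_mul_of_nonneg_right (mul_le_mul hE1 hA' n1 (by norm_num)) n2
      _ ≤ 1 * (2 * c * m) * (2 * c * M) := by
          exact mul_le_mul_of_nonneg_left hB' (by positivity)
      _ = 2 * c * m * (2 * c * M) := by ring
  -- upper: N ≤ (mM + 5c) D
  have goalU : E * (1 - a) * (1 - b) ≤ (m * M + 5 * c) * (2 * c * (1 - q)) := by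
    have h2 : 4 * c ^ 2 * (m * M) ≤ (m * M + 5 * c) * (2 * c * (1 - q)) := by
      rw [← mul_le_mul_iff_of_pos_right (show (0:ℝ) < 1 + 2 * c by linarith)]
      have h7 : (m * M + 5 * c) * (2 * c * (2 * c)) ≤
          (m * M + 5 * c) * (2 * c * ((1 - q) * (1 + 2 * c))) :=
        mul_le_mul_of_nonneg_left (mul_le_mul_of_nonneg_left hq6 (by linarith)) (by positivity)
      have h8 : 0 ≤ c * c * c * (20 - 8 * (m * M)) := by
        apply mul_nonneg (by positivity); linarith
      linarith [h7, h8]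
    calc E * (1 - a) * (1 - b) ≤ 2 * c * m * (2 * c * M) := h1
      _ = 4 * c ^ 2 * (m * M) := by ring
      _ ≤ _ := h2
  -- lower: (mM - 5c) D ≤ N
  have hcm : 2 * c * m ≤ 1 := by nlinarith [mul_nonneg hc.le (sub_nonneg.2 hm1)]
  have hcM : 2 * c * M ≤ 1 := by nlinarith [mul_nonneg hc.le (sub_nonneg.2 hM1)]
  have p1 : 0 ≤ 2 * c * m * (1 - 2 * c * m) :=
    mul_nonneg (by positivity) (by linarith)
  have p2 : 0 ≤ 2 * c * M * (1 - 2 * c * M) :=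
    mul_nonneg (by positivity) (by linarith)
  have hN : (1 - c) * (2 * c * m * (1 - 2 * c * m) * (2 * c * M * (1 - 2 * c * M)))
      ≤ E * (1 - a) * (1 - b) := by
    calc (1 - c) * (2 * c * m * (1 - 2 * c * m) * (2 * c * M * (1 - 2 * c * M)))
        ≤ E * (2 * c * m * (1 - 2 * c * m) * (2 * c * M * (1 - 2 * c * M))) :=
          mul_le_mul_of_nonneg_right hE3 (mul_nonneg p1 p2)
      _ ≤ E * ((1 - a) * (1 - b)) :=
          mul_le_mul_of_nonneg_left (mul_le_mul hA hB p2 n1) hEpos.le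
      _ = E * (1 - a) * (1 - b) := by ring
  have goalL : (m * M - 5 * c) * (2 * c * (1 - q)) ≤ E * (1 - a) * (1 - b) := by
    rcases le_or_gt (m * M) (5 * c) with h | h
    · have hL : (m * M - 5 * c) * (2 * c * (1 - q)) ≤ 0 :=
        mul_nonpos_of_nonpos_of_nonneg (by linarith) hD.le
      have hR : 0 ≤ E * (1 - a) * (1 - b) := by positivity
      linarith
    · have h9 : 1 - 5 * c ≤ (1 - c) * (1 - 2 * c) * (1 - 2 * c) := by nlinarith [sq_nonneg c]
      have h10 : (1 - c) * (1 - 2 * c) * (1 - 2 * c) ≤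
          (1 - c) * (1 - 2 * c * m) * (1 - 2 * c * M) := by
        have e1 : (1:ℝ) - 2 * c ≤ 1 - 2 * c * m := by
          nlinarith [mul_nonneg hc.le (sub_nonneg.2 hm1)]
        have e2 : (1:ℝ) - 2 * c ≤ 1 - 2 * c * M := by
          nlinarith [mul_nonneg hc.le (sub_nonneg.2 hM1)]
        have e3 : (0:ℝ) ≤ 1 - 2 * c := by linarith
        have e4 : (0:ℝ) ≤ 1 - c := by linarith
        calc (1 - c) * (1 - 2 * c) * (1 - 2 * c)
            ≤ (1 - c) * (1 - 2 * c * m) * (1 - 2 * c) :=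
              mul_le_mul_of_nonneg_right (mul_le_mul_of_nonneg_left e1 e4) e3
          _ ≤ (1 - c) * (1 - 2 * c * m) * (1 - 2 * c * M) := by
              apply mul_le_mul_of_nonneg_left e2
              apply mul_nonneg e4; linarith
      have h11 : m * M - 5 * c ≤ m * M * ((1 - c) * (1 - 2 * c * m) * (1 - 2 * c * M)) := by
        have := mul_le_mul_of_nonneg_left (le_trans h9 h10) (mul_nonneg hm hM)
        nlinarith [mul_nonneg (mul_nonneg hm hM) hc.le]
      have h12 : (m * M - 5 * c) * (2 * c * (1 - q)) ≤ (m * M - 5 * c) * (2 * c * (2 * c)) :=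
        mul_le_mul_of_nonneg_left
          (mul_le_mul_of_nonneg_left hq5 (by linarith)) (by linarith)
      have h13 : (m * M - 5 * c) * (2 * c * (2 * c)) ≤
          m * M * ((1 - c) * (1 - 2 * c * m) * (1 - 2 * c * M)) * (2 * c * (2 * c)) :=
        mul_le_mul_of_nonneg_right h11 (by positivity)
      have h14 : m * M * ((1 - c) * (1 - 2 * c * m) * (1 - 2 * c * M)) * (2 * c * (2 * c))
          = (1 - c) * (2 * c * m * (1 - 2 * c * m) * (2 * c * M * (1 - 2 * c * M))) := by
        ring
      linarith
  have heq : -(E * (1 - a) * (1 - b)) / (2 * c * (1 - q)) - (-(m * M))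
      = (m * M * (2 * c * (1 - q)) - E * (1 - a) * (1 - b)) / (2 * c * (1 - q)) := by
    rw [eq_div_iff hD.ne', sub_mul, div_mul_cancel₀ _ hD.ne']; ring
  rw [heq, abs_div, abs_of_pos hD, div_le_iff₀ hD, abs_le]
  constructor
  · linarith [goalU]
  · linarith [goalL]


lemma keyc' (e r m M d : ℝ) (hc : 0 < e * r) (hc2 : e * r ≤ 1/2) (hm : 0 ≤ m) (hm1 : m ≤ 1)
    (hM : 0 ≤ M) (hM1 : M ≤ 1) (hd : 0 ≤ d) (hd1 : d ≤ 1) :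
    |(-(Real.exp (-(e * r * d)) * (1 - Real.exp (-(2 * e * r * m))) *
        (1 - Real.exp (-(2 * e * r * M)))) /
      (2 * e * r * (1 - Real.exp (-(2 * e * r))))) - (-(m * M))| ≤ 5 * (e * r) := by
  rw [show (2:ℝ) * e * r = 2 * (e * r) from by ring]
  exact keyc (e * r) m M d hc hc2 hm hm1 hM hM1 hd hd1

/-- uniform convergence of the Dirichlet Green function `G_{1,ε}`
to `Υ(t,s) = -min(t,s)(1-max(t,s))` on `[0,1]×[0,1]` as `ε → 0⁺`. -/
theorem green_dirichlet_uniform_limit (p : ℝ) (hp : 0 < p) :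
    Tendsto
      (fun ε : ℝ =>
        ⨆ t : Set.Icc (0:ℝ) 1, ⨆ s : Set.Icc (0:ℝ) 1,
          |(-(Real.exp (-(ε * Real.sqrt p * |(t:ℝ) - s|)) *
              (1 - Real.exp (-(2 * ε * Real.sqrt p * min (t:ℝ) s))) *
              (1 - Real.exp (-(2 * ε * Real.sqrt p * (1 - max (t:ℝ) s))))) /
            (2 * ε * Real.sqrt p * (1 - Real.exp (-(2 * ε * Real.sqrt p)))))
            - (-(min (t:ℝ) s * (1 - max (t:ℝ) s)))|)
      (nhdsWithin 0 (Set.Ioi 0)) (nhds 0) := by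
  have hsp : 0 < Real.sqrt p := Real.sqrt_pos.2 hp
  have hg : Tendsto (fun ε : ℝ => 5 * (ε * Real.sqrt p)) (nhdsWithin 0 (Set.Ioi 0)) (nhds 0) := by
    have hcont : Continuous fun ε : ℝ => 5 * (ε * Real.sqrt p) := by continuity
    have h0 := (hcont.tendsto 0).mono_left (nhdsWithin_le_nhds (s := Set.Ioi 0))
    simpa using h0
  refine squeeze_zero' ?_ ?_ hg
  · filter_upwards with ε
    exact Real.iSup_nonneg fun t => Real.iSup_nonneg fun s => abs_nonneg _
  · filter_upwards [Ioo_mem_nhdsGT_of_mem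
      (show (0:ℝ) ∈ Set.Ico 0 (1 / (2 * Real.sqrt p)) from ⟨le_refl _, by positivity⟩)] with ε hε
    have hc : 0 < ε * Real.sqrt p := mul_pos hε.1 hsp
    have hc2 : ε * Real.sqrt p ≤ 1 / 2 := by
      have h2 := hε.2
      rw [lt_div_iff₀ (by positivity)] at h2
      nlinarith
    refine Real.iSup_le (fun t => Real.iSup_le (fun s => ?_) (by positivity)) (by positivity)
    have ht1 : (0:ℝ) ≤ t := t.2.1
    have ht2 : (t:ℝ) ≤ 1 := t.2.2
    have hs1 : (0:ℝ) ≤ s := s.2.1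
    have hs2 : (s:ℝ) ≤ 1 := s.2.2
    refine keyc' ε (Real.sqrt p) (min (t:ℝ) s) (1 - max (t:ℝ) s) |(t:ℝ) - s| hc hc2
      (le_min ht1 hs1) ((min_le_left _ _).trans ht2) ?_ ?_ (abs_nonneg _) ?_
    · have := max_le ht2 hs2; linarith
    · have := le_max_left (t:ℝ) s; linarith
    · rw [abs_le]; constructor <;> linarith
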